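/- arXiv:2112.06868 — 4 statements merged into one kernel-verified Lean document; each statement's English description precedes it below -/
import Mathlib

section
/- Let $L_1(\tilde{A}, \tilde{B}, \tilde{\epsilon}) = \frac{1}{2\tilde{\epsilon}^2}\|A - \tilde{A}\tilde{B}A\|_F^2 + \frac{1}{2}\|\tilde{B}A\|_F^2 + (d - r)\log\tilde{\epsilon} + \frac{1}{2}\sum_{i=1}^r(1 + \log(\|\tilde{A}_i\|^2 + \tilde{\epsilon}^2))$. Fix $\delta > 0$, and suppose a sequence $(\tilde{A}_t, \tilde{B}_t, \tilde{\epsilon}_t)$ satisfies: at most $r - d$ columns of each $\tilde{A}_t$ have norm less than $\delta$. Then $\inf_t L_1(\tilde{A}_t, \tilde{B}_t, \tilde{\epsilon}_t) > -\infty$ holds uniformly over $\tilde{\epsilon}_t \in (0, 1]$; more precisely, $(d-r)\log\tilde{\epsilon} + \frac{1}{2}\sum_i(1 + \log(\|\tilde{A}_i\|^2 + \tilde{\epsilon}^2)) \ge \frac{1}{2}\sum_{i : \|\tilde{A}_i\| \ge \delta}(1 + \log(\delta^2 + \tilde{\epsilon}^2))$ whenever at most $r-d$ columns have norm below $\delta$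 and $\tilde{\epsilon} \le 1$. -/
open Finset

/-- If at most `r - d` columns of `Ã` have norm below `δ` and `ε̃ ∈ (0,1]`, then the
`log` terms of the simplified linear VAE loss are bounded below:
`(d-r) log ε̃ + (1/2)∑ᵢ (1 + log(‖Ãᵢ‖² + ε̃²)) ≥ (1/2)∑_{i : ‖Ãᵢ‖ ≥ δ} (1 + log(δ² + ε̃²))`. -/
theorem stmt_9 (d r : ℕ) (δ : ℝ) (hδ : 0 < δ)
    (Atil : Matrix (Fin d) (Fin r) ℝ)
    (ε : ℝ) (hε : 0 < ε) (hε1 : ε ≤ 1)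
    (hcols : ((univ.filter fun i : Fin r =>
        Real.sqrt (∑ k, (Atil k i) ^ 2) < δ).card : ℤ) ≤ (r : ℤ) - d) :
    (1 / 2) * ∑ i ∈ univ.filter
        (fun i : Fin r => δ ≤ Real.sqrt (∑ k, (Atil k i) ^ 2)),
        (1 + Real.log (δ ^ 2 + ε ^ 2)) ≤
      ((d : ℝ) - r) * Real.log ε +
        (1 / 2) * ∑ i, (1 + Real.log ((∑ k, (Atil k i) ^ 2) + ε ^ 2)) := by
  have hf0 : ∀ i : Fin r, (0:ℝ) ≤ ∑ k, (Atil k i) ^ 2 :=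
    fun i => Finset.sum_nonneg fun k _ => sq_nonneg _
  set S := univ.filter (fun i : Fin r => δ ≤ Real.sqrt (∑ k, (Atil k i) ^ 2)) with hS
  set Sc := univ.filter (fun i : Fin r => Real.sqrt (∑ k, (Atil k i) ^ 2) < δ) with hSc
  have hsplit : ∑ i, (1 + Real.log ((∑ k, (Atil k i) ^ 2) + ε ^ 2))
      = ∑ i ∈ S, (1 + Real.log ((∑ k, (Atil k i) ^ 2) + ε ^ 2))
        + ∑ i ∈ Sc, (1 + Real.log ((∑ k, (Atil k i) ^ 2) + ε ^ 2)) := by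
    rw [hS, hSc,
      ← Finset.sum_filter_add_sum_filter_not univ
        (fun i : Fin r => δ ≤ Real.sqrt (∑ k, (Atil k i) ^ 2))]
    congr 2
    ext i
    simp [not_le]
  have hS_bound : ∑ i ∈ S, (1 + Real.log (δ ^ 2 + ε ^ 2))
      ≤ ∑ i ∈ S, (1 + Real.log ((∑ k, (Atil k i) ^ 2) + ε ^ 2)) := by
    apply Finset.sum_le_sum
    intro i hi
    have hi' : δ ≤ Real.sqrt (∑ k, (Atil k i) ^ 2) := (Finset.mem_filter.mp hi).2
    have hsq : δ ^ 2 ≤ ∑ k, (Atil k i) ^ 2 := by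
      have h1 := Real.sq_sqrt (hf0 i)
      nlinarith [Real.sqrt_nonneg (∑ k, (Atil k i) ^ 2)]
    have hlog := Real.log_le_log (by positivity) (add_le_add_left hsq (ε ^ 2))
    linarith
  have hSc_bound : ∑ i ∈ Sc, (1 + 2 * Real.log ε)
      ≤ ∑ i ∈ Sc, (1 + Real.log ((∑ k, (Atil k i) ^ 2) + ε ^ 2)) := by
    apply Finset.sum_le_sum
    intro i _
    have h1 : Real.log (ε ^ 2) ≤ Real.log ((∑ k, (Atil k i) ^ 2) + ε ^ 2) :=
      Real.log_le_log (by positivity) (by linarith [hf0 i])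
    rw [Real.log_pow] at h1
    push_cast at h1
    linarith
  have hcard : ((d : ℝ) - r + Sc.card) ≤ 0 := by
    have h : ((Sc.card : ℝ)) ≤ (r : ℝ) - d := by exact_mod_cast hcols
    linarith
  have hlogε : Real.log ε ≤ 0 := Real.log_nonpos hε.le hε1
  have key : 0 ≤ ((d:ℝ) - r + Sc.card) * Real.log ε := by nlinarith
  have hconst1 : ∑ i ∈ S, (1 + Real.log (δ ^ 2 + ε ^ 2))
      = S.card * (1 + Real.log (δ ^ 2 + ε ^ 2)) := by
    simp [Finset.sum_const, nsmul_eq_mul]; ring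
  have hconst2 : ∑ i ∈ Sc, (1 + 2 * Real.log ε)
      = Sc.card * (1 + 2 * Real.log ε) := by
    simp [Finset.sum_const, nsmul_eq_mul]; ring
  rw [hsplit]
  nlinarith [key, (Nat.cast_nonneg Sc.card : (0:ℝ) ≤ Sc.card), hlogε, hS_bound, hSc_bound]
end

section
/- Let $A \in \mathbb{R}^{d \times r^*}$ and suppose row $i$ of $A$ is zero. Let $\tilde{A} \in \mathbb{R}^{d \times r}$, $\tilde{B} \in \mathbb{R}^{r \times d}$. Then $\sum_{j=1}^r \tilde{A}_{ij} \frac{\partial}{\partial \tilde{A}_{ij}} \|A - \tilde{A}\tilde{B}A\|_F^2 = 2\,\|(\tilde{A}\tilde{B}A)^{(i)}\|^2 \ge 0$, where $(\tilde{A}\tilde{B}A)^{(i)}$ denotes row $i$ of $\tilde{A}\tilde{B}A$. -/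
open Finset Matrix

/-- If row `i` of `A` is zero, then the gradient of the reconstruction term
`‖A - ÃB̃A‖_F²` with respect to row `i` of `Ã` has inner product with that row equal to
`2‖(ÃB̃A)⁽ⁱ⁾‖² ≥ 0`. The partial derivative `∂/∂Ãᵢⱼ` is expressed as the derivative at `0`
of the perturbation `t ↦ Ã + t·Eᵢⱼ`. -/
theorem stmt_12 (d rstar r : ℕ)
    (A : Matrix (Fin d) (Fin rstar) ℝ)
    (i : Fin d) (hrow : ∀ l, A i l = 0)
    (Atil : Matrix (Fin d) (Fin r) ℝ)
    (Btil : Matrix (Fin r) (Fin d) ℝ) :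
    (∑ j, Atil i j *
        deriv (fun t : ℝ =>
          ∑ k, ∑ l, ((A - (Atil + t • (Matrix.single i j 1 : Matrix (Fin d) (Fin r) ℝ)) * Btil * A) k l) ^ 2) 0) =
      2 * ∑ l, ((Atil * Btil * A) i l) ^ 2 ∧
    0 ≤ 2 * ∑ l, ((Atil * Btil * A) i l) ^ 2 := by
  constructor
  · set C : Matrix (Fin d) (Fin rstar) ℝ := A - Atil * Btil * A with hC
    have hentry : ∀ (j : Fin r) (t : ℝ) (k : Fin d) (l : Fin rstar),
        (A - (Atil + t • (Matrix.single i j 1 : Matrix (Fin d) (Fin r) ℝ)) * Btil * A) k l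
          = C k l - t * ((Matrix.single i j 1 : Matrix (Fin d) (Fin r) ℝ) * Btil * A) k l := by
      intro j t k l
      have : (Atil + t • (Matrix.single i j 1 : Matrix (Fin d) (Fin r) ℝ)) * Btil * A
          = Atil * Btil * A + t • ((Matrix.single i j 1 : Matrix (Fin d) (Fin r) ℝ) * Btil * A) := by
        rw [Matrix.add_mul, Matrix.add_mul, Matrix.smul_mul, Matrix.smul_mul]
      rw [this]
      simp [hC, Matrix.sub_apply, Matrix.add_apply, Matrix.smul_apply, smul_eq_mul]
      ring
    have hderiv : ∀ (j : Fin r),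
        deriv (fun t : ℝ =>
          ∑ k, ∑ l, ((A - (Atil + t • (Matrix.single i j 1 : Matrix (Fin d) (Fin r) ℝ)) * Btil * A) k l) ^ 2) 0
        = ∑ k, ∑ l, (2 * C k l *
            (-((Matrix.single i j 1 : Matrix (Fin d) (Fin r) ℝ) * Btil * A) k l)) := by
      intro j
      have h : HasDerivAt (fun t : ℝ =>
          ∑ k, ∑ l, ((A - (Atil + t • (Matrix.single i j 1 : Matrix (Fin d) (Fin r) ℝ)) * Btil * A) k l) ^ 2)
          (∑ k, ∑ l, (2 * C k l *
            (-((Matrix.single i j 1 : Matrix (Fin d) (Fin r) ℝ) * Btil * A) k l))) 0 := by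
        have h2 : ∀ (k : Fin d) (l : Fin rstar), HasDerivAt (fun t : ℝ =>
            ((A - (Atil + t • (Matrix.single i j 1 : Matrix (Fin d) (Fin r) ℝ)) * Btil * A) k l) ^ 2)
            (2 * C k l * (-((Matrix.single i j 1 : Matrix (Fin d) (Fin r) ℝ) * Btil * A) k l)) 0 := by
          intro k l
          set e := ((Matrix.single i j 1 : Matrix (Fin d) (Fin r) ℝ) * Btil * A) k l
          have hg : HasDerivAt (fun t : ℝ => C k l - t * e) (-e) 0 := by
            simpa using ((hasDerivAt_id (0:ℝ)).mul_const e).const_sub (C k l)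
          have := hg.fun_pow 2
          simp only [hentry j]
          refine this.congr_deriv ?_
          simp
        exact HasDerivAt.fun_sum (fun k _ => HasDerivAt.fun_sum (fun l _ => h2 k l))
      exact h.deriv
    have hE : ∀ (j : Fin r) (k : Fin d) (l : Fin rstar),
        ((Matrix.single i j 1 : Matrix (Fin d) (Fin r) ℝ) * Btil * A) k l
          = if k = i then (Btil * A) j l else 0 := by
      intro j k l
      rw [Matrix.mul_assoc, Matrix.mul_apply]
      by_cases hk : k = i
      · subst hk
        rw [if_pos rfl, Finset.sum_eq_single j]
        · simp [Matrix.single]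
        · intro m _ hm
          simp [Matrix.single, (Ne.symm hm : ¬ j = m)]
        · simp
      · rw [if_neg hk]
        apply Finset.sum_eq_zero; intro m _
        simp [Matrix.single, (Ne.symm hk : ¬ i = k)]
    have hCi : ∀ l, C i l = -((Atil * Btil * A) i l) := by
      intro l; simp [hC, Matrix.sub_apply, hrow l]
    calc (∑ j, Atil i j *
        deriv (fun t : ℝ =>
          ∑ k, ∑ l, ((A - (Atil + t • (Matrix.single i j 1 : Matrix (Fin d) (Fin r) ℝ)) * Btil * A) k l) ^ 2) 0)
        = ∑ j, Atil i j * ∑ l, 2 * (Atil * Btil * A) i l * (Btil * A) j l := by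
          refine Finset.sum_congr rfl fun j _ => ?_
          rw [hderiv j]
          congr 1
          rw [Finset.sum_eq_single i]
          · refine Finset.sum_congr rfl fun l _ => ?_
            rw [hE, hCi]; simp
          · intro k _ hk
            apply Finset.sum_eq_zero
            intro l _
            rw [hE]; simp [hk]
          · simp
      _ = 2 * ∑ l, ((Atil * Btil * A) i l) ^ 2 := by
          simp only [Finset.mul_sum]
          rw [Finset.sum_comm]
          refine Finset.sum_congr rfl fun l _ => ?_
          have hM : (Atil * Btil * A) i l = ∑ j, Atil i j * (Btil * A) j l := by
            rw [Matrix.mul_assoc, Matrix.mul_apply]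
          calc ∑ j, Atil i j * (2 * (Atil * Btil * A) i l * (Btil * A) j l)
              = 2 * (Atil * Btil * A) i l * ∑ j, Atil i j * (Btil * A) j l := by
                rw [Finset.mul_sum]
                exact Finset.sum_congr rfl fun j _ => by ring
            _ = 2 * (Atil * Btil * A) i l ^ 2 := by rw [← hM]; ring
  · positivity
end

section
/- Let $A \in \mathbb{R}^{d \times r^*}$ with row $i$ equal to zero, and let $L_1(\tilde{A}, \tilde{B}, \tilde{\epsilon}) = \frac{1}{2\tilde{\epsilon}^2}\|A - \tilde{A}\tilde{B}A\|_F^2 + \frac{1}{2}\|\tilde{B}A\|_F^2 + (d-r)\log\tilde{\epsilon} + \frac{1}{2}\sum_{k=1}^r(1 + \log(\|\tilde{A}_k\|^2 + \tilde{\epsilon}^2))$. Then $\sum_{j=1}^r \tilde{A}_{ij}\frac{\partial L_1}{\partial \tilde{A}_{ij}} \ge \sum_{j=1}^r \frac{\tilde{A}_{ij}^2}{\|\tilde{A}_j\|^2 + \tilde{\epsilon}^2}$. -/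
open Finset Matrix

/-- Gradient correlation lemma for the simplified linear VAE loss `L₁`: if row `i` of
`A` is zero then `∑ⱼ Ãᵢⱼ ∂L₁/∂Ãᵢⱼ ≥ ∑ⱼ Ãᵢⱼ²/(‖Ãⱼ‖² + ε̃²)`, where `∂/∂Ãᵢⱼ` is expressed
as the derivative at `0` of the perturbation `t ↦ Ã + t·Eᵢⱼ`. -/
theorem stmt_13 (d rstar r : ℕ)
    (A : Matrix (Fin d) (Fin rstar) ℝ)
    (i : Fin d) (hrow : ∀ l, A i l = 0)
    (Atil : Matrix (Fin d) (Fin r) ℝ)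
    (Btil : Matrix (Fin r) (Fin d) ℝ)
    (ε : ℝ) (hε : 0 < ε)
    (L1 : Matrix (Fin d) (Fin r) ℝ → ℝ)
    (hL1 : ∀ M : Matrix (Fin d) (Fin r) ℝ,
      L1 M = (1 / (2 * ε ^ 2)) * (∑ k, ∑ l, ((A - M * Btil * A) k l) ^ 2) +
        (1 / 2) * (∑ k, ∑ l, ((Btil * A) k l) ^ 2) + ((d : ℝ) - r) * Real.log ε +
        (1 / 2) * ∑ k, (1 + Real.log ((∑ l, (M l k) ^ 2) + ε ^ 2))) :
    (∑ j, (Atil i j) ^ 2 / ((∑ k, (Atil k j) ^ 2) + ε ^ 2)) ≤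
      ∑ j, Atil i j *
        deriv (fun t : ℝ =>
          L1 (Atil + t • (single i j 1 : Matrix (Fin d) (Fin r) ℝ))) 0 := by
  have hε2 : (0:ℝ) < ε ^ 2 := by positivity
  have key : ∀ j : Fin r,
      deriv (fun t : ℝ =>
          L1 (Atil + t • (single i j 1 : Matrix (Fin d) (Fin r) ℝ))) 0
      = (ε ^ 2)⁻¹ * (∑ l, ((Atil * Btil * A) i l) * ((Btil * A) j l))
        + Atil i j / ((∑ k, (Atil k j) ^ 2) + ε ^ 2) := by
    intro j
    set E : Matrix (Fin d) (Fin r) ℝ := single i j 1 with hE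
    have hEapp : ∀ (l : Fin d) (k : Fin r), E l k = if l = i ∧ k = j then 1 else 0 := by
      intro l k
      simp [hE, Matrix.single]
      aesop
    have hEmul : ∀ (k : Fin d) (l : Fin rstar),
        (E * Btil * A) k l = if k = i then (Btil * A) j l else 0 := by
      intro k l
      rw [Matrix.mul_assoc, Matrix.mul_apply]
      by_cases hk : k = i
      · simp [hEapp, hk]
      · simp [hEapp, hk]
    -- rewrite the function
    have hfun : (fun t : ℝ => L1 (Atil + t • E)) = fun t : ℝ =>
        (1 / (2 * ε ^ 2)) *
          (∑ k, ∑ l, ((A - Atil * Btil * A) k l - t * ((E * Btil * A) k l)) ^ 2) +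
        ((1 / 2) * (∑ k, ∑ l, ((Btil * A) k l) ^ 2) + ((d : ℝ) - r) * Real.log ε) +
        (1 / 2) * ∑ k, (1 + Real.log ((∑ l, (Atil l k + t * E l k) ^ 2) + ε ^ 2)) := by
      funext t
      rw [hL1]
      have hM : (Atil + t • E) * Btil * A = Atil * Btil * A + t • (E * Btil * A) := by
        rw [Matrix.add_mul, Matrix.add_mul, Matrix.smul_mul, Matrix.smul_mul]
      rw [hM]
      have ha : ∀ (k : Fin d) (l : Fin rstar),
          (A - (Atil * Btil * A + t • (E * Btil * A))) k l
          = (A - Atil * Btil * A) k l - t * (E * Btil * A) k l := by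
        intro k l
        simp [Matrix.sub_apply, Matrix.add_apply, Matrix.smul_apply]
        ring
      have hb : ∀ (l : Fin d) (k : Fin r), (Atil + t • E) l k = Atil l k + t * E l k := by
        intro l k
        simp [Matrix.add_apply, Matrix.smul_apply]
      simp only [ha, hb]
      ring
    rw [hfun]
    -- derivative of the first piece
    have h1 : HasDerivAt (fun t : ℝ =>
        ∑ k, ∑ l, ((A - Atil * Btil * A) k l - t * ((E * Btil * A) k l)) ^ 2)
        (∑ k, ∑ l, 2 * ((A - Atil * Btil * A) k l) * (-((E * Btil * A) k l))) 0 := by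
      apply HasDerivAt.fun_sum; intro k _
      apply HasDerivAt.fun_sum; intro l _
      have h := (((hasDerivAt_id (0:ℝ)).mul_const ((E * Btil * A) k l)).const_sub
        ((A - Atil * Btil * A) k l)).fun_pow 2
      simpa using h
    -- derivative of the log piece
    have h4 : HasDerivAt (fun t : ℝ =>
        ∑ k, (1 + Real.log ((∑ l, (Atil l k + t * E l k) ^ 2) + ε ^ 2)))
        (∑ k, (∑ l, 2 * Atil l k * E l k) / ((∑ l, (Atil l k) ^ 2) + ε ^ 2)) 0 := by
      apply HasDerivAt.fun_sum; intro k _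
      have hu : HasDerivAt (fun t : ℝ => (∑ l, (Atil l k + t * E l k) ^ 2) + ε ^ 2)
          (∑ l, 2 * Atil l k * E l k) 0 := by
        apply HasDerivAt.add_const
        apply HasDerivAt.fun_sum; intro l _
        have h := (((hasDerivAt_id (0:ℝ)).mul_const (E l k)).const_add (Atil l k)).fun_pow 2
        simpa [mul_comm] using h
      have hpos : (∑ l, (Atil l k + (0:ℝ) * E l k) ^ 2) + ε ^ 2 ≠ 0 := by
        have : (0:ℝ) < (∑ l, (Atil l k + (0:ℝ) * E l k) ^ 2) + ε ^ 2 := by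
          apply add_pos_of_nonneg_of_pos (Finset.sum_nonneg fun _ _ => sq_nonneg _) hε2
        exact ne_of_gt this
      have hlog := (Real.hasDerivAt_log hpos).comp 0 hu
      have := hlog.const_add (1 : ℝ)
      convert this using 1
      all_goals simp [div_eq_mul_inv, mul_comm]
    have hD : HasDerivAt (fun t : ℝ =>
        (1 / (2 * ε ^ 2)) *
          (∑ k, ∑ l, ((A - Atil * Btil * A) k l - t * ((E * Btil * A) k l)) ^ 2) +
        ((1 / 2) * (∑ k, ∑ l, ((Btil * A) k l) ^ 2) + ((d : ℝ) - r) * Real.log ε) +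
        (1 / 2) * ∑ k, (1 + Real.log ((∑ l, (Atil l k + t * E l k) ^ 2) + ε ^ 2)))
        ((1 / (2 * ε ^ 2)) *
          (∑ k, ∑ l, 2 * ((A - Atil * Btil * A) k l) * (-((E * Btil * A) k l))) +
         (1 / 2) * (∑ k, (∑ l, 2 * Atil l k * E l k) / ((∑ l, (Atil l k) ^ 2) + ε ^ 2))) 0 := by
      have := ((h1.const_mul (1 / (2 * ε ^ 2))).add_const
        ((1 / 2) * (∑ k, ∑ l, ((Btil * A) k l) ^ 2) + ((d : ℝ) - r) * Real.log ε)).add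
        (h4.const_mul (1 / 2))
      simpa [Pi.add_def] using this
    rw [hD.deriv]
    -- now compute the value
    have e1 : (∑ k, ∑ l, 2 * ((A - Atil * Btil * A) k l) * (-((E * Btil * A) k l)))
        = 2 * ∑ l, ((Atil * Btil * A) i l) * ((Btil * A) j l) := by
      rw [Finset.mul_sum]
      rw [Finset.sum_eq_single i]
      · apply Finset.sum_congr rfl; intro l _
        rw [hEmul]
        simp [Matrix.sub_apply, hrow l]
        ring
      · intro k _ hk
        apply Finset.sum_eq_zero; intro l _
        rw [hEmul]
        simp [hk]
      · intro h; exact absurd (Finset.mem_univ i) h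
    have e2 : (∑ k, (∑ l, 2 * Atil l k * E l k) / ((∑ l, (Atil l k) ^ 2) + ε ^ 2))
        = 2 * Atil i j / ((∑ k, (Atil k j) ^ 2) + ε ^ 2) := by
      rw [Finset.sum_eq_single j]
      · congr 1
        rw [Finset.sum_eq_single i]
        · simp [hEapp]
        · intro l _ hl; simp [hEapp, hl]
        · intro h; exact absurd (Finset.mem_univ i) h
      · intro k _ hk
        have : (∑ l, 2 * Atil l k * E l k) = 0 := by
          apply Finset.sum_eq_zero; intro l _
          simp [hEapp, hk]
        simp [this]
      · intro h; exact absurd (Finset.mem_univ j) h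
    rw [e1, e2]
    field_simp
  -- final computation
  have hsum : ∑ j, Atil i j *
        deriv (fun t : ℝ =>
          L1 (Atil + t • (single i j 1 : Matrix (Fin d) (Fin r) ℝ))) 0
      = (ε ^ 2)⁻¹ * (∑ l, ((Atil * Btil * A) i l) ^ 2)
        + ∑ j, (Atil i j) ^ 2 / ((∑ k, (Atil k j) ^ 2) + ε ^ 2) := by
    calc ∑ j, Atil i j *
          deriv (fun t : ℝ =>
            L1 (Atil + t • (single i j 1 : Matrix (Fin d) (Fin r) ℝ))) 0
        = ∑ j, (Atil i j * ((ε ^ 2)⁻¹ * (∑ l, ((Atil * Btil * A) i l) * ((Btil * A) j l)))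
            + (Atil i j) ^ 2 / ((∑ k, (Atil k j) ^ 2) + ε ^ 2)) := by
          apply Finset.sum_congr rfl; intro j _
          rw [key j]
          rw [mul_add]
          congr 1
          rw [mul_div_assoc', ← pow_two]
      _ = (ε ^ 2)⁻¹ * (∑ l, ((Atil * Btil * A) i l) ^ 2)
            + ∑ j, (Atil i j) ^ 2 / ((∑ k, (Atil k j) ^ 2) + ε ^ 2) := by
          rw [Finset.sum_add_distrib]
          congr 1
          have hM : ∀ l, (∑ j, Atil i j * (Btil * A) j l) = (Atil * Btil * A) i l := by
            intro l
            rw [Matrix.mul_assoc, Matrix.mul_apply]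
          have step : ∑ j, Atil i j *
                ((ε ^ 2)⁻¹ * ∑ l, (Atil * Btil * A) i l * (Btil * A) j l)
              = ∑ j, ∑ l, (ε ^ 2)⁻¹ *
                  ((Atil * Btil * A) i l * (Atil i j * (Btil * A) j l)) := by
            apply Finset.sum_congr rfl; intro j _
            rw [Finset.mul_sum, Finset.mul_sum]
            apply Finset.sum_congr rfl; intro l _; ring
          rw [step, Finset.sum_comm, Finset.mul_sum]
          apply Finset.sum_congr rfl; intro l _
          rw [← Finset.mul_sum, ← Finset.mul_sum, hM l]
          ring
  rw [hsum]
  have : 0 ≤ (ε ^ 2)⁻¹ * (∑ l, ((Atil * Btil * A) i l) ^ 2) := by positivity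
  linarith
end

section
/- Let $A \in \mathbb{R}^{d \times r^*}$ have zero row $i$, and let $(\tilde{A}(t), \tilde{B}(t), \tilde{\epsilon}(t))$ solve the gradient flow $\frac{d\tilde{\Theta}}{dt} = -\nabla L_1(\tilde{\Theta})$ on $[0, T]$ for the simplified loss $L_1(\tilde{A}, \tilde{B}, \tilde{\epsilon}) = \frac{1}{2\tilde{\epsilon}^2}\|A - \tilde{A}\tilde{B}A\|_F^2 + \frac{1}{2}\|\tilde{B}A\|_F^2 + (d-r)\log\tilde{\epsilon} + \frac{1}{2}\sum_j(1 + \log(\|\tilde{A}_j\|^2 + \tilde{\epsilon}^2))$. If $\max_{t \in [0,T]}\max_j(\|\tilde{A}(t)_j\|^2 + \tilde{\epsilon}(t)^2) \le K$, then $\|\tilde{A}^{(i)}(t)\|^2 \le e^{-t/K}\|\tilde{A}^{(i)}(0)\|^2$ for all $t \in [0, T]$, where $\tilde{A}^{(i)}$ denotes row $i$ of $\tilde{A}$. -/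
open Finset Matrix

lemma aux_deriv (d rstar r : ℕ) (A : Matrix (Fin d) (Fin rstar) ℝ)
    (M : Matrix (Fin d) (Fin r) ℝ) (B : Matrix (Fin r) (Fin d) ℝ)
    (ε : ℝ) (hε : 0 < ε) (i : Fin d) (j : Fin r) :
    HasDerivAt (fun u : ℝ =>
      (1 / (2 * ε ^ 2)) * (∑ k, ∑ l, ((A - (M + u • (Matrix.single i j 1 : Matrix (Fin d) (Fin r) ℝ)) * B * A) k l) ^ 2) +
        (1 / 2) * (∑ k, ∑ l, ((B * A) k l) ^ 2) + ((d : ℝ) - r) * Real.log ε +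
        (1 / 2) * ∑ j', (1 + Real.log ((∑ k, ((M + u • (Matrix.single i j 1 : Matrix (Fin d) (Fin r) ℝ)) k j') ^ 2) + ε ^ 2)))
      ((1 / ε ^ 2) * (∑ l, ((A - M * B * A) i l) * (-(B * A) j l))
        + M i j / ((∑ k, (M k j) ^ 2) + ε ^ 2)) 0 := by
  set E : Matrix (Fin d) (Fin r) ℝ := Matrix.single i j 1 with hE
  have hmul : ∀ u : ℝ, (M + u • E) * B * A = M * B * A + u • (E * B * A) := by
    intro u; rw [Matrix.add_mul, Matrix.smul_mul, Matrix.add_mul, Matrix.smul_mul]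
  -- rewrite function
  have hfun : (fun u : ℝ =>
      (1 / (2 * ε ^ 2)) * (∑ k, ∑ l, ((A - (M + u • E) * B * A) k l) ^ 2) +
        (1 / 2) * (∑ k, ∑ l, ((B * A) k l) ^ 2) + ((d : ℝ) - r) * Real.log ε +
        (1 / 2) * ∑ j', (1 + Real.log ((∑ k, ((M + u • E) k j') ^ 2) + ε ^ 2)))
      = (fun u : ℝ =>
      (1 / (2 * ε ^ 2)) * (∑ k, ∑ l, ((A - M * B * A) k l - u * (E * B * A) k l) ^ 2) +
        (1 / 2) * (∑ k, ∑ l, ((B * A) k l) ^ 2) + ((d : ℝ) - r) * Real.log ε +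
        (1 / 2) * ∑ j', (1 + Real.log ((∑ k, (M k j' + u * E k j') ^ 2) + ε ^ 2))) := by
    funext u
    rw [hmul u]
    have h1 : ∀ (k : Fin d) (l : Fin rstar),
        (A - (M * B * A + u • (E * B * A))) k l = (A - M * B * A) k l - u * (E * B * A) k l := by
      intro k l
      simp [Matrix.sub_apply, Matrix.add_apply, Matrix.smul_apply, smul_eq_mul]
      ring
    have h2 : ∀ (k : Fin d) (j' : Fin r),
        (M + u • E) k j' = M k j' + u * E k j' := by
      intro k j'
      simp [Matrix.add_apply, Matrix.smul_apply, smul_eq_mul]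
    simp only [h1, h2]
  rw [hfun]
  have hb : ∀ (k : Fin d) (l : Fin rstar),
      (E * B * A) k l = if i = k then (B * A) j l else 0 := by
    intro k l
    simp only [hE, Matrix.mul_apply, Matrix.single, of_apply, ite_and]
    by_cases h : i = k <;>
      simp [h, ite_mul, Finset.sum_ite_eq, Matrix.mul_apply]
  have he : ∀ (k : Fin d) (j' : Fin r), E k j' = if i = k ∧ j = j' then 1 else 0 := by
    intro k j'; simp [hE, Matrix.single]
  have hSpos : ∀ j' : Fin r, (0:ℝ) < (∑ k, (M k j' + 0 * E k j') ^ 2) + ε ^ 2 := by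
    intro j'
    have : (0:ℝ) < ε ^ 2 := by positivity
    have h0 : (0:ℝ) ≤ ∑ k, (M k j' + 0 * E k j') ^ 2 := by positivity
    linarith
  have hT1 : HasDerivAt (fun u : ℝ =>
      (1 / (2 * ε ^ 2)) * ∑ k, ∑ l, ((A - M * B * A) k l - u * (E * B * A) k l) ^ 2)
      ((1 / (2 * ε ^ 2)) * ∑ k, ∑ l,
        ((2:ℕ) * ((A - M * B * A) k l - 0 * (E * B * A) k l) ^ 1 * (0 - 1 * (E * B * A) k l))) 0 := by
    apply HasDerivAt.const_mul
    apply HasDerivAt.fun_sum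
    intro k _
    apply HasDerivAt.fun_sum
    intro l _
    exact ((hasDerivAt_const 0 _).sub ((hasDerivAt_id 0).mul_const _)).pow 2
  have hT4 : HasDerivAt (fun u : ℝ =>
      (1 / 2) * ∑ j', (1 + Real.log ((∑ k, (M k j' + u * E k j') ^ 2) + ε ^ 2)))
      ((1 / 2) * ∑ j',
        ((∑ k, (2:ℕ) * (M k j' + 0 * E k j') ^ 1 * (0 + 1 * E k j')) /
          ((∑ k, (M k j' + 0 * E k j') ^ 2) + ε ^ 2))) 0 := by
    apply HasDerivAt.const_mul
    apply HasDerivAt.fun_sum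
    intro j' _
    apply HasDerivAt.const_add
    apply HasDerivAt.log
    · apply HasDerivAt.add_const
      apply HasDerivAt.fun_sum
      intro k _
      exact ((hasDerivAt_const 0 _).add ((hasDerivAt_id 0).mul_const _)).pow 2
    · exact (hSpos j').ne'
  have htot := ((hT1.add_const ((1 / 2) * (∑ k, ∑ l, ((B * A) k l) ^ 2))).add_const
      (((d : ℝ) - r) * Real.log ε)).add hT4
  refine htot.congr_deriv ?_
  symm
  simp only [zero_mul, mul_zero, sub_zero, add_zero, zero_sub, zero_add, pow_one, one_mul,
    Nat.cast_ofNat, hb, he]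
  have hsum1 : (∑ x : Fin d, ∑ x1 : Fin rstar,
      2 * (A - M * B * A) x x1 * -if i = x then (B * A) j x1 else 0)
      = ∑ l, 2 * ((A - M * B * A) i l * -(B * A) j l) := by
    rw [Finset.sum_eq_single i]
    · simp [mul_assoc]
    · intro b _ hb'
      simp [Ne.symm hb']
    · intro h; exact absurd (Finset.mem_univ i) h
  have hsum2 : (∑ x : Fin r,
      (∑ x1 : Fin d, 2 * M x1 x * if i = x1 ∧ j = x then 1 else 0) /
        (∑ x1 : Fin d, M x1 x ^ 2 + ε ^ 2))
      = (2 * M i j) / (∑ x1 : Fin d, M x1 j ^ 2 + ε ^ 2) := by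
    rw [Finset.sum_eq_single j]
    · simp [mul_ite, Finset.sum_ite_eq, and_comm]
    · intro b _ hb'
      simp [Ne.symm hb']
    · intro h; exact absurd (Finset.mem_univ j) h
  rw [hsum1, hsum2]
  have hD : (∑ x1 : Fin d, M x1 j ^ 2) + ε ^ 2 ≠ 0 := by
    have : (0:ℝ) < ε ^ 2 := by positivity
    have h0 : (0:ℝ) ≤ ∑ x1 : Fin d, M x1 j ^ 2 := by positivity
    linarith
  rw [← Finset.mul_sum]
  field_simp

/-- Exponential decay of extra decoder rows along the gradient flow of the simplified
linear VAE loss `L₁`. The gradient flow is stated entrywise: each parameter entry moves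
in the direction of minus the corresponding partial derivative (expressed as the
derivative at `0` of a rank-one perturbation, and as the ordinary derivative for `ε̃`). -/
theorem stmt_15 (d rstar r : ℕ)
    (A : Matrix (Fin d) (Fin rstar) ℝ)
    (i : Fin d) (hrow : ∀ l, A i l = 0)
    (T K : ℝ) (hT : 0 ≤ T) (hK : 0 < K)
    (L1 : Matrix (Fin d) (Fin r) ℝ → Matrix (Fin r) (Fin d) ℝ → ℝ → ℝ)
    (hL1 : ∀ M B (ε : ℝ), 0 < ε →
      L1 M B ε = (1 / (2 * ε ^ 2)) * (∑ k, ∑ l, ((A - M * B * A) k l) ^ 2) +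
        (1 / 2) * (∑ k, ∑ l, ((B * A) k l) ^ 2) + ((d : ℝ) - r) * Real.log ε +
        (1 / 2) * ∑ j, (1 + Real.log ((∑ k, (M k j) ^ 2) + ε ^ 2)))
    (Atil : ℝ → Matrix (Fin d) (Fin r) ℝ)
    (Btil : ℝ → Matrix (Fin r) (Fin d) ℝ)
    (epstil : ℝ → ℝ)
    (heps : ∀ t ∈ Set.Icc 0 T, 0 < epstil t)
    (hflowA : ∀ t ∈ Set.Icc 0 T, ∀ k j, HasDerivAt (fun s => Atil s k j)
      (-(deriv (fun u : ℝ =>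
        L1 (Atil t + u • (Matrix.single k j 1 : Matrix (Fin d) (Fin r) ℝ))
          (Btil t) (epstil t)) 0)) t)
    (hflowB : ∀ t ∈ Set.Icc 0 T, ∀ j k, HasDerivAt (fun s => Btil s j k)
      (-(deriv (fun u : ℝ =>
        L1 (Atil t) (Btil t + u • (Matrix.single j k 1 : Matrix (Fin r) (Fin d) ℝ))
          (epstil t)) 0)) t)
    (hfloweps : ∀ t ∈ Set.Icc 0 T,
      HasDerivAt epstil (-(deriv (fun u : ℝ => L1 (Atil t) (Btil t) u) (epstil t))) t)
    (hbound : ∀ t ∈ Set.Icc 0 T, ∀ j, (∑ k, (Atil t k j) ^ 2) + (epstil t) ^ 2 ≤ K) :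
    ∀ t ∈ Set.Icc 0 T,
      (∑ j, (Atil t i j) ^ 2) ≤ Real.exp (-t / K) * ∑ j, (Atil 0 i j) ^ 2 := by
  -- the derivative value of each row-i entry
  set V : ℝ → Fin r → ℝ := fun s j =>
    (1 / (epstil s) ^ 2) * (∑ l, ((A - Atil s * Btil s * A) i l) * (-(Btil s * A) j l))
      + Atil s i j / ((∑ k, (Atil s k j) ^ 2) + (epstil s) ^ 2) with hV
  have key : ∀ s ∈ Set.Icc 0 T, HasDerivAt (fun u => ∑ j, (Atil u i j) ^ 2)
      (∑ j, 2 * Atil s i j * (-(V s j))) s := by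
    intro s hs
    have hεs := heps s hs
    apply HasDerivAt.fun_sum
    intro j _
    have hrw : (fun u : ℝ => L1 (Atil s + u • (Matrix.single i j 1 : Matrix (Fin d) (Fin r) ℝ))
        (Btil s) (epstil s)) = (fun u : ℝ =>
        (1 / (2 * (epstil s) ^ 2)) * (∑ k, ∑ l, ((A - (Atil s + u • (Matrix.single i j 1 : Matrix (Fin d) (Fin r) ℝ)) * Btil s * A) k l) ^ 2) +
        (1 / 2) * (∑ k, ∑ l, ((Btil s * A) k l) ^ 2) + ((d : ℝ) - r) * Real.log (epstil s) +
        (1 / 2) * ∑ j', (1 + Real.log ((∑ k, ((Atil s + u • (Matrix.single i j 1 : Matrix (Fin d) (Fin r) ℝ)) k j') ^ 2) + (epstil s) ^ 2))) :=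
      funext fun u => hL1 _ _ _ hεs
    have hdv : deriv (fun u : ℝ => L1 (Atil s + u • (Matrix.single i j 1 : Matrix (Fin d) (Fin r) ℝ))
        (Btil s) (epstil s)) 0 = V s j := by
      rw [hrw]
      exact (aux_deriv d rstar r A (Atil s) (Btil s) (epstil s) hεs i j).deriv
    have h := hflowA s hs i j
    rw [hdv] at h
    have h2 := h.pow 2
    refine h2.congr_deriv ?_
    push_cast
    ring
  -- the derivative is bounded by -(1/K) times the value
  have hbnd : ∀ s ∈ Set.Icc 0 T,
      (∑ j, 2 * Atil s i j * (-(V s j))) ≤ -(1 / K) * ∑ j, (Atil s i j) ^ 2 := by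
    intro s hs
    have hεs := heps s hs
    set M := Atil s with hM
    set Bt := Btil s with hBt
    set ε := epstil s with hε
    have hC : ∀ j, (∑ l, ((A - M * Bt * A) i l) * (-(Bt * A) j l))
        = ∑ l, (M * Bt * A) i l * (Bt * A) j l := by
      intro j
      apply Finset.sum_congr rfl
      intro l _
      have : (A - M * Bt * A) i l = -((M * Bt * A) i l) := by
        simp [Matrix.sub_apply, hrow l]
      rw [this]; ring
    have hP : ∑ j, M i j * (∑ l, (M * Bt * A) i l * (Bt * A) j l)
        = ∑ l, ((M * Bt * A) i l) ^ 2 := by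
      simp_rw [Finset.mul_sum]
      rw [Finset.sum_comm]
      apply Finset.sum_congr rfl
      intro l _
      have hMl : (M * Bt * A) i l = ∑ j, M i j * (Bt * A) j l := by
        rw [Matrix.mul_assoc, Matrix.mul_apply]
      calc ∑ j, M i j * ((M * Bt * A) i l * (Bt * A) j l)
          = (M * Bt * A) i l * ∑ j, M i j * (Bt * A) j l := by
            rw [Finset.mul_sum]; apply Finset.sum_congr rfl; intro j _; ring
        _ = ((M * Bt * A) i l) ^ 2 := by rw [← hMl]; ring
    have hsplit : (∑ j, 2 * M i j * (-(V s j)))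
        = -((2 / ε ^ 2) * ∑ j, M i j * (∑ l, (M * Bt * A) i l * (Bt * A) j l))
          - 2 * ∑ j, (M i j) ^ 2 / ((∑ k, (M k j) ^ 2) + ε ^ 2) := by
      rw [Finset.mul_sum, Finset.mul_sum, ← Finset.sum_neg_distrib, ← Finset.sum_sub_distrib]
      apply Finset.sum_congr rfl
      intro j _
      rw [hV]
      simp only [← hM, ← hBt, ← hε]
      simp only [hC j]
      field_simp
      ring
    rw [hsplit, hP]
    have hsq : (0:ℝ) ≤ ∑ l, ((M * Bt * A) i l) ^ 2 := by positivity
    have hε2 : (0:ℝ) < ε ^ 2 := by positivity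
    have hterm : ∀ j : Fin r, (M i j) ^ 2 / K ≤ (M i j) ^ 2 / ((∑ k, (M k j) ^ 2) + ε ^ 2) := by
      intro j
      have hD : (0:ℝ) < (∑ k, (M k j) ^ 2) + ε ^ 2 := by positivity
      have hDK : (∑ k, (M k j) ^ 2) + ε ^ 2 ≤ K := hbound s hs j
      gcongr
    have hsum : (∑ j, (M i j) ^ 2) / K ≤ ∑ j, (M i j) ^ 2 / ((∑ k, (M k j) ^ 2) + ε ^ 2) := by
      rw [Finset.sum_div]
      exact Finset.sum_le_sum fun j _ => hterm j
    have hfnn : (0:ℝ) ≤ ∑ j, (M i j) ^ 2 := by positivity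
    have h1 : (0:ℝ) ≤ (2 / ε ^ 2) * ∑ l, ((M * Bt * A) i l) ^ 2 := by positivity
    have hDnn : (0:ℝ) ≤ ∑ j, (M i j) ^ 2 / ((∑ k, (M k j) ^ 2) + ε ^ 2) := by
      apply Finset.sum_nonneg
      intro j _
      have hD : (0:ℝ) < (∑ k, (M k j) ^ 2) + ε ^ 2 := by positivity
      exact div_nonneg (sq_nonneg _) hD.le
    have heq : (1 / K) * ∑ j, (M i j) ^ 2 = (∑ j, (M i j) ^ 2) / K := by ring
    linarith
  -- Gronwall via monotonicity of exp(s/K) * f s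
  set f : ℝ → ℝ := fun s => ∑ j, (Atil s i j) ^ 2 with hf
  set g : ℝ → ℝ := fun s => Real.exp (s / K) * f s with hg
  have hgd : ∀ s ∈ Set.Icc 0 T, HasDerivAt g
      (Real.exp (s / K) * (1 / K) * f s + Real.exp (s / K) * (∑ j, 2 * Atil s i j * (-(V s j)))) s := by
    intro s hs
    have he : HasDerivAt (fun x : ℝ => Real.exp (x / K)) (Real.exp (s / K) * (1 / K)) s := by
      have := ((hasDerivAt_id s).div_const K).exp
      simpa [one_div] using this
    exact he.mul (key s hs)
  have hanti : AntitoneOn g (Set.Icc 0 T) := by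
    apply antitoneOn_of_deriv_nonpos (convex_Icc 0 T)
    · intro s hs
      exact ((hgd s hs).differentiableAt.continuousAt).continuousWithinAt
    · intro s hs
      rw [interior_Icc] at hs
      exact (hgd s (Set.Ioo_subset_Icc_self hs)).differentiableAt.differentiableWithinAt
    · intro s hs
      rw [interior_Icc] at hs
      have hs' := Set.Ioo_subset_Icc_self hs
      rw [(hgd s hs').deriv]
      have hb := hbnd s hs'
      have hexp : (0:ℝ) < Real.exp (s / K) := Real.exp_pos _
      have hfnn : (0:ℝ) ≤ f s := by
        apply Finset.sum_nonneg; intro j _; exact sq_nonneg _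
      have h1 : Real.exp (s / K) * (∑ j, 2 * Atil s i j * (-(V s j)))
          ≤ Real.exp (s / K) * (-(1 / K) * f s) := by
        exact mul_le_mul_of_nonneg_left hb hexp.le
      nlinarith
  intro t ht
  have h0 : g t ≤ g 0 := hanti (Set.left_mem_Icc.mpr hT) ht ht.1
  have hg0 : g 0 = f 0 := by simp [hg]
  have hexp' : (0:ℝ) ≤ Real.exp (-t / K) := (Real.exp_pos _).le
  have hcalc : f t = Real.exp (-t / K) * (Real.exp (t / K) * f t) := by
    rw [← mul_assoc, ← Real.exp_add]
    have : -t / K + t / K = 0 := by ring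
    rw [this, Real.exp_zero, one_mul]
  calc (∑ j, (Atil t i j) ^ 2) = f t := rfl
    _ = Real.exp (-t / K) * (Real.exp (t / K) * f t) := hcalc
    _ = Real.exp (-t / K) * g t := rfl
    _ ≤ Real.exp (-t / K) * g 0 := mul_le_mul_of_nonneg_left h0 hexp'
    _ = Real.exp (-t / K) * ∑ j, (Atil 0 i j) ^ 2 := by rw [hg0]
end
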